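/- For every n ≥ 1, the n-th generalized graded codimension of UT₂ with its canonical ℤ₂-grading and with the action of B = UT₂ itself by left and right multiplication is c_n^{UT₂} = 2^{n−1}(n+2) + 2. -/

import Mathlib

noncomputable section

/-- The algebra of `2 × 2` matrices over `F` (ambient algebra for `UT₂`). -/
abbrev M2 (F : Type*) [Field F] := Matrix (Fin 2) (Fin 2) F

/-- The matrix unit `e₁₁`. -/
def e11 (F : Type*) [Field F] : M2 F := Matrix.single 0 0 1

/-- The matrix unit `e₁₂`. -/
def e12 (F : Type*) [Field F] : M2 F := Matrix.single 0 1 1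

/-- The matrix unit `e₂₂`. -/
def e22 (F : Type*) [Field F] : M2 F := Matrix.single 1 1 1

/-- The homogeneous components of the canonical `ℤ₂`-grading of `UT₂`:
`UT₂⁰ = F e₁₁ ⊕ F e₂₂` and `UT₂¹ = F e₁₂`. -/
def utComp (F : Type*) [Field F] (b : Bool) : Submodule F (M2 F) :=
  if b then Submodule.span F {e12 F} else Submodule.span F {e11 F, e22 F}

/-- `UT₂`, the set of `2 × 2` upper triangular matrices. -/
def UTset (F : Type*) [Field F] : Set (M2 F) := {M | M 1 0 = 0}

/-- The space `V_B(γ)`: the `F`-span of all functions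
`(x₁,…,xₙ) ↦ b₀ x_{σ(1)} b₁ x_{σ(2)} ⋯ b_{n-1} x_{σ(n)} bₙ` with `σ` a permutation and
`b₀,…,bₙ ∈ B`, defined on the homogeneous components prescribed by `γ ∈ {0,1}ⁿ`. -/
def Vspan (F : Type*) [Field F] (B : Set (M2 F)) {n : ℕ} (γ : Fin n → Bool) :
    Submodule F ((∀ i : Fin n, ↥(utComp F (γ i))) → M2 F) :=
  Submodule.span F
    {f | ∃ (σ : Equiv.Perm (Fin n)) (b : Fin (n + 1) → M2 F),
      (∀ i, b i ∈ B) ∧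
      f = fun x => b 0 * (List.ofFn fun i : Fin n => ((x (σ i) : M2 F) * b i.succ)).prod}


namespace Aux

variable {F : Type*} [Field F]

lemma mul00 (A B : M2 F) : (A*B) 0 0 = A 0 0 * B 0 0 + A 0 1 * B 1 0 := by
  simp [Matrix.mul_apply, Fin.sum_univ_two]
lemma mul01 (A B : M2 F) : (A*B) 0 1 = A 0 0 * B 0 1 + A 0 1 * B 1 1 := by
  simp [Matrix.mul_apply, Fin.sum_univ_two]
lemma mul10 (A B : M2 F) : (A*B) 1 0 = A 1 0 * B 0 0 + A 1 1 * B 1 0 := by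
  simp [Matrix.mul_apply, Fin.sum_univ_two]
lemma mul11 (A B : M2 F) : (A*B) 1 1 = A 1 0 * B 0 1 + A 1 1 * B 1 1 := by
  simp [Matrix.mul_apply, Fin.sum_univ_two]

/-- The generator product. -/
def Pgen {n : ℕ} (b : Fin (n+1) → M2 F) (y : Fin n → M2 F) : M2 F :=
  b 0 * (List.ofFn fun i : Fin n => y i * b i.succ).prod

lemma Pgen_zero (b : Fin 1 → M2 F) (y : Fin 0 → M2 F) : Pgen b y = b 0 := by
  simp [Pgen]

lemma Pgen_succ {n : ℕ} (b : Fin (n+2) → M2 F) (y : Fin (n+1) → M2 F) :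
    Pgen b y = Pgen (fun j => b j.castSucc) (fun i => y i.castSucc)
      * (y (Fin.last n) * b (Fin.last (n+1))) := by
  unfold Pgen
  rw [List.ofFn_succ']
  simp only [List.prod_concat, Fin.succ_castSucc, Fin.succ_last, Fin.castSucc_zero, ← mul_assoc]

def Acoef {n : ℕ} (b : Fin (n+1) → M2 F) (j : Fin (n+1)) : F :=
  (∏ m : Fin (n+1), if (m:ℕ) < (j:ℕ) then b m 0 0 else 1) * b j 0 1 *
    (∏ m : Fin (n+1), if (j:ℕ) < (m:ℕ) then b m 1 1 else 1)

def Bcoef {n : ℕ} (b : Fin (n+1) → M2 F) (j : Fin n) : F :=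
  (∏ m : Fin (n+1), if (m:ℕ) ≤ (j:ℕ) then b m 0 0 else 1) * b j.succ 1 1 *
    (∏ m : Fin (n+1), if (j:ℕ)+1 < (m:ℕ) then b m 1 1 else 1)

def monT {n : ℕ} (y : Fin n → M2 F) (j : Fin (n+1)) : F :=
  ∏ i : Fin n, if (i:ℕ) < (j:ℕ) then y i 0 0 else y i 1 1

def monU {n : ℕ} (y : Fin n → M2 F) (j : Fin n) : F :=
  ∏ i : Fin n, if (i:ℕ) < (j:ℕ) then y i 0 0 else if i = j then y i 0 1 else y i 1 1

lemma P10 {n : ℕ} (b : Fin (n+1) → M2 F) (y : Fin n → M2 F)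
    (hb : ∀ j, b j 1 0 = 0) (hy : ∀ i, y i 1 0 = 0) : Pgen b y 1 0 = 0 := by
  induction n with
  | zero => rw [Pgen_zero]; exact hb 0
  | succ n ih =>
      rw [Pgen_succ, mul10, mul10, hy, hb]
      rw [ih _ _ (fun j => hb _) (fun i => hy _)]
      ring

lemma P00 {n : ℕ} (b : Fin (n+1) → M2 F) (y : Fin n → M2 F)
    (hb : ∀ j, b j 1 0 = 0) (hy : ∀ i, y i 1 0 = 0) :
    Pgen b y 0 0 = (∏ j, b j 0 0) * ∏ i, y i 0 0 := by
  induction n with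
  | zero => rw [Pgen_zero]; simp
  | succ n ih =>
      rw [Pgen_succ, mul00, mul00, mul10, hy, hb,
        ih _ _ (fun j => hb _) (fun i => hy _),
        Fin.prod_univ_castSucc (f := fun j => b j 0 0),
        Fin.prod_univ_castSucc (f := fun i => y i 0 0)]
      ring

lemma P11 {n : ℕ} (b : Fin (n+1) → M2 F) (y : Fin n → M2 F)
    (hb : ∀ j, b j 1 0 = 0) (hy : ∀ i, y i 1 0 = 0) :
    Pgen b y 1 1 = (∏ j, b j 1 1) * ∏ i, y i 1 1 := by
  induction n with
  | zero => rw [Pgen_zero]; simp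
  | succ n ih =>
      rw [Pgen_succ, mul11, mul11, hy,
        P10 _ _ (fun j => hb _) (fun i => hy _),
        ih _ _ (fun j => hb _) (fun i => hy _),
        Fin.prod_univ_castSucc (f := fun j => b j 1 1),
        Fin.prod_univ_castSucc (f := fun i => y i 1 1)]
      ring


lemma P01 {n : ℕ} (b : Fin (n+1) → M2 F) (y : Fin n → M2 F)
    (hb : ∀ j, b j 1 0 = 0) (hy : ∀ i, y i 1 0 = 0) :
    Pgen b y 0 1 = (∑ j : Fin (n+1), Acoef b j * monT y j)
      + (∑ j : Fin n, Bcoef b j * monU y j) := by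
  induction n with
  | zero =>
      rw [Pgen_zero]
      simp [Acoef, monT, monU]
  | succ n ih =>
      have hb' : ∀ j : Fin (n+1), b j.castSucc 1 0 = 0 := fun j => hb _
      have hy' : ∀ i : Fin n, y i.castSucc 1 0 = 0 := fun i => hy _
      rw [Pgen_succ, mul01, mul01, mul11, hy,
        P00 _ _ hb' hy', ih _ _ hb' hy']
      -- now rewrite the RHS sums
      rw [Fin.sum_univ_castSucc (f := fun j => Acoef b j * monT y j),
        Fin.sum_univ_castSucc (f := fun j => Bcoef b j * monU y j)]
      have hA : ∀ j : Fin (n+1), Acoef b j.castSucc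
          = Acoef (fun m => b m.castSucc) j * b (Fin.last (n+1)) 1 1 := by
        intro j
        unfold Acoef
        rw [Fin.prod_univ_castSucc (f := fun m => if (m:ℕ) < ((j.castSucc:Fin (n+2)):ℕ) then b m 0 0 else 1),
          Fin.prod_univ_castSucc (f := fun m => if ((j.castSucc:Fin (n+2)):ℕ) < (m:ℕ) then b m 1 1 else 1)]
        simp only [Fin.coe_castSucc, Fin.val_last]
        rw [if_neg (by omega), if_pos (by omega)]
        ring
      have hT : ∀ j : Fin (n+1), monT y j.castSucc
          = monT (fun i => y i.castSucc) j * y (Fin.last n) 1 1 := by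
        intro j
        unfold monT
        rw [Fin.prod_univ_castSucc (f := fun i => if (i:ℕ) < ((j.castSucc : Fin (n+2)):ℕ) then y i 0 0 else y i 1 1)]
        simp only [Fin.coe_castSucc, Fin.val_last]
        rw [if_neg (by omega)]
      have hB : ∀ j : Fin n, Bcoef b j.castSucc
          = Bcoef (fun m => b m.castSucc) j * b (Fin.last (n+1)) 1 1 := by
        intro j
        unfold Bcoef
        rw [Fin.prod_univ_castSucc (f := fun m => if (m:ℕ) ≤ ((j.castSucc : Fin (n+1)):ℕ) then b m 0 0 else 1),
          Fin.prod_univ_castSucc (f := fun m => if ((j.castSucc : Fin (n+1)):ℕ)+1 < (m:ℕ) then b m 1 1 else 1)]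
        simp only [Fin.coe_castSucc, Fin.val_last, Fin.succ_castSucc]
        rw [if_neg (by omega), if_pos (by omega)]
        ring
      have hU : ∀ j : Fin n, monU y j.castSucc
          = monU (fun i => y i.castSucc) j * y (Fin.last n) 1 1 := by
        intro j
        unfold monU
        rw [Fin.prod_univ_castSucc
          (f := fun i => if (i:ℕ) < ((j.castSucc : Fin (n+1)):ℕ) then y i 0 0
            else if i = j.castSucc then y i 0 1 else y i 1 1)]
        simp only [Fin.coe_castSucc, Fin.val_last]
        rw [if_neg (by omega), if_neg (by
          intro h
          have := congrArg (fun z : Fin (n+1) => (z:ℕ)) h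
          simp at this
          omega)]
        congr 1
        apply Finset.prod_congr rfl
        intro i _
        by_cases h1 : (i:ℕ) < (j:ℕ)
        · rw [if_pos h1, if_pos h1]
        · rw [if_neg h1, if_neg h1]
          by_cases h2 : i = j
          · rw [if_pos (by rw [h2]), if_pos h2]
          · rw [if_neg (by
              intro h; apply h2; exact Fin.castSucc_injective _ h), if_neg h2]
      have hAlast : Acoef b (Fin.last (n+1))
          = (∏ j : Fin (n+1), b j.castSucc 0 0) * b (Fin.last (n+1)) 0 1 := by
        unfold Acoef
        rw [Fin.prod_univ_castSucc (f := fun m => if (m:ℕ) < ((Fin.last (n+1) : Fin (n+2)):ℕ) then b m 0 0 else 1)]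
        simp only [Fin.coe_castSucc, Fin.val_last]
        rw [if_neg (by omega)]
        have : (∏ m : Fin (n+2), if (n+1 : ℕ) < (m:ℕ) then b m 1 1 else 1) = 1 := by
          apply Finset.prod_eq_one
          intro m _
          rw [if_neg (by omega)]
        rw [this]
        have : ∀ j : Fin (n+1), ((j:ℕ) < n+1) := fun j => j.isLt
        rw [Finset.prod_congr rfl (fun j _ => if_pos (this j))]
        ring
      have hTlast : monT y (Fin.last (n+1)) = ∏ i : Fin (n+1), y i 0 0 := by
        unfold monT
        apply Finset.prod_congr rfl
        intro i _
        rw [if_pos (by simpa using i.isLt)]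
      have hBlast : Bcoef b (Fin.last n)
          = (∏ j : Fin (n+1), b j.castSucc 0 0) * b (Fin.last (n+1)) 1 1 := by
        unfold Bcoef
        rw [Fin.prod_univ_castSucc (f := fun m => if (m:ℕ) ≤ ((Fin.last n : Fin (n+1)):ℕ) then b m 0 0 else 1)]
        simp only [Fin.coe_castSucc, Fin.val_last, Fin.succ_last]
        rw [if_neg (by omega)]
        have h1 : (∏ m : Fin (n+2), if (n:ℕ)+1 < (m:ℕ) then b m 1 1 else 1) = 1 := by
          apply Finset.prod_eq_one
          intro m _
          rw [if_neg (by omega)]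
        rw [h1]
        have h2 : ∀ j : Fin (n+1), ((j:ℕ) ≤ n) := fun j => by omega
        rw [Finset.prod_congr rfl (fun j _ => if_pos (h2 j))]
        ring
      have hUlast : monU y (Fin.last n)
          = (∏ i : Fin n, y i.castSucc 0 0) * y (Fin.last n) 0 1 := by
        unfold monU
        rw [Fin.prod_univ_castSucc
          (f := fun i => if (i:ℕ) < ((Fin.last n : Fin (n+1)):ℕ) then y i 0 0
            else if i = Fin.last n then y i 0 1 else y i 1 1)]
        have h4 : (if ((Fin.last n : Fin (n+1)):ℕ) < ((Fin.last n : Fin (n+1)):ℕ) then y (Fin.last n) 0 0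
            else if (Fin.last n : Fin (n+1)) = Fin.last n then y (Fin.last n) 0 1 else y (Fin.last n) 1 1)
            = y (Fin.last n) 0 1 := by simp
        rw [h4]
        congr 1
        apply Finset.prod_congr rfl
        intro i _
        rw [if_pos (by simpa using i.isLt)]
      simp only [hA, hT, hB, hU, hAlast, hTlast, hBlast, hUlast]
      rw [Fin.prod_univ_castSucc (f := fun i => y i 0 0)]
      have e1 : ∑ x : Fin (n+1), Acoef (fun j => b j.castSucc) x * b (Fin.last (n+1)) 1 1 *
            (monT (fun i => y i.castSucc) x * y (Fin.last n) 1 1)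
          = (∑ x : Fin (n+1), Acoef (fun j => b j.castSucc) x * monT (fun i => y i.castSucc) x) *
            (b (Fin.last (n+1)) 1 1 * y (Fin.last n) 1 1) := by
        rw [Finset.sum_mul]
        apply Finset.sum_congr rfl
        intro x _
        ring
      have e2 : ∑ x : Fin n, Bcoef (fun j => b j.castSucc) x * b (Fin.last (n+1)) 1 1 *
            (monU (fun i => y i.castSucc) x * y (Fin.last n) 1 1)
          = (∑ x : Fin n, Bcoef (fun j => b j.castSucc) x * monU (fun i => y i.castSucc) x) *
            (b (Fin.last (n+1)) 1 1 * y (Fin.last n) 1 1) := by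
        rw [Finset.sum_mul]
        apply Finset.sum_congr rfl
        intro x _
        ring
      rw [e1, e2]
      ring


section Comp

variable {F : Type*} [Field F] {n : ℕ}

lemma comp_true {M : M2 F} (h : M ∈ utComp F true) :
    M 0 0 = 0 ∧ M 1 1 = 0 ∧ M 1 0 = 0 := by
  rw [utComp, if_pos rfl, Submodule.mem_span_singleton] at h
  obtain ⟨a, rfl⟩ := h
  refine ⟨?_, ?_, ?_⟩ <;> simp [e12, Matrix.single]

lemma comp_false {M : M2 F} (h : M ∈ utComp F false) :
    M 0 1 = 0 ∧ M 1 0 = 0 := by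
  rw [utComp, if_neg (by simp), Submodule.mem_span_pair] at h
  obtain ⟨a, b, rfl⟩ := h
  constructor <;> simp [e11, e22, Matrix.single]

lemma comp10 {g : Bool} (x : ↥(utComp F g)) : (x : M2 F) 1 0 = 0 := by
  cases g
  · exact (comp_false x.2).2
  · exact (comp_true x.2).2.2

lemma ut_decomp (A : M2 F) (h : A 1 0 = 0) :
    A = A 0 0 • e11 F + A 0 1 • e12 F + A 1 1 • e22 F := by
  ext i j
  fin_cases i <;> fin_cases j <;>
    simp [e11, e12, e22, Matrix.single, h]

/-- monomial functions on the graded components -/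
def mon (γ ε : Fin n → Bool) (x : ∀ i, ↥(utComp F (γ i))) : F :=
  ∏ i, if γ i then (x i : M2 F) 0 1 else if ε i then (x i : M2 F) 0 0 else (x i : M2 F) 1 1

def hfun (γ ε : Fin n → Bool) : (∀ i, ↥(utComp F (γ i))) → M2 F :=
  fun x => mon γ ε x • e12 F

def dfun1 (γ : Fin n → Bool) : (∀ i, ↥(utComp F (γ i))) → M2 F :=
  fun x => (∏ i, (x i : M2 F) 0 0) • e11 F

def dfun2 (γ : Fin n → Bool) : (∀ i, ↥(utComp F (γ i))) → M2 F :=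
  fun x => (∏ i, (x i : M2 F) 1 1) • e22 F

variable {γ : Fin n → Bool} (σ : Equiv.Perm (Fin n)) (b : Fin (n+1) → M2 F)
  (x : ∀ i, ↥(utComp F (γ i)))

lemma gen_eq (hb : ∀ j, b j 1 0 = 0) :
    b 0 * (List.ofFn fun i : Fin n => ((x (σ i) : M2 F) * b i.succ)).prod
    = ((∏ j, b j 0 0) * ∏ i, (x i : M2 F) 0 0) • e11 F
      + ((∑ j : Fin (n+1), Acoef b j * monT (fun i => (x (σ i) : M2 F)) j)
          + ∑ j : Fin n, Bcoef b j * monU (fun i => (x (σ i) : M2 F)) j) • e12 F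
      + ((∏ j, b j 1 1) * ∏ i, (x i : M2 F) 1 1) • e22 F := by
  have hy : ∀ i : Fin n, ((x (σ i) : M2 F)) 1 0 = 0 := fun i => comp10 _
  have h0 : Pgen b (fun i => (x (σ i) : M2 F)) 1 0 = 0 := P10 _ _ hb hy
  have := ut_decomp (Pgen b (fun i => (x (σ i) : M2 F))) h0
  rw [P00 _ _ hb hy, P01 _ _ hb hy, P11 _ _ hb hy] at this
  rw [show b 0 * (List.ofFn fun i : Fin n => ((x (σ i) : M2 F) * b i.succ)).prod
      = Pgen b (fun i => (x (σ i) : M2 F)) from rfl, this]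
  rw [Equiv.prod_comp σ (fun i => (x i : M2 F) 0 0),
    Equiv.prod_comp σ (fun i => (x i : M2 F) 1 1)]

lemma monT_reindex (j : Fin (n+1)) :
    monT (fun i => (x (σ i) : M2 F)) j
    = ∏ i, if ((σ.symm i : Fin n) : ℕ) < (j : ℕ)
        then (x i : M2 F) 0 0 else (x i : M2 F) 1 1 := by
  rw [← Equiv.prod_comp σ (fun i => if ((σ.symm i : Fin n) : ℕ) < (j : ℕ)
        then (x i : M2 F) 0 0 else (x i : M2 F) 1 1)]
  unfold monT
  apply Finset.prod_congr rfl
  intro i _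
  rw [Equiv.symm_apply_apply]

lemma monU_reindex (j : Fin n) :
    monU (fun i => (x (σ i) : M2 F)) j
    = ∏ i, if ((σ.symm i : Fin n) : ℕ) < (j : ℕ) then (x i : M2 F) 0 0
        else if i = σ j then (x i : M2 F) 0 1 else (x i : M2 F) 1 1 := by
  rw [← Equiv.prod_comp σ (fun i => if ((σ.symm i : Fin n) : ℕ) < (j : ℕ)
        then (x i : M2 F) 0 0 else if i = σ j then (x i : M2 F) 0 1 else (x i : M2 F) 1 1)]
  unfold monU
  apply Finset.prod_congr rfl
  intro i _
  rw [Equiv.symm_apply_apply]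
  by_cases h1 : (i : ℕ) < (j : ℕ)
  · rw [if_pos h1, if_pos h1]
  · rw [if_neg h1, if_neg h1]
    by_cases h2 : i = j
    · subst h2
      rw [if_pos rfl, if_pos rfl]
    · rw [if_neg h2, if_neg (fun h => h2 (σ.injective h))]

end Comp


section SortPerm

variable {n : ℕ}

lemma exists_sort_perm (p : Fin n → Prop) [DecidablePred p] :
    ∃ (σ : Equiv.Perm (Fin n)), ∀ i, p i ↔ ((σ.symm i : Fin n) : ℕ) < Fintype.card {i // p i} := by
  classical
  set c := Fintype.card {i // p i} with hc
  have hle : c ≤ n := by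
    have := Fintype.card_subtype_le p
    simpa using this
  have hcompl : Fintype.card {i // ¬ p i} = n - c := by
    rw [Fintype.card_subtype_compl]
    simp [hc]
  have hsum : n = c + (n - c) := by omega
  let e1 : {i // p i} ≃ Fin c := Fintype.equivFinOfCardEq rfl
  let e2 : {i // ¬ p i} ≃ Fin (n - c) := Fintype.equivFinOfCardEq hcompl
  let E : Equiv.Perm (Fin n) :=
    ((finCongr hsum).trans (finSumFinEquiv.symm)).trans
      ((e1.symm.sumCongr e2.symm).trans (Equiv.sumCompl p))
  have key : ∀ k : Fin n, p (E k) ↔ (k : ℕ) < c := by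
    intro k
    by_cases hk : (k : ℕ) < c
    · have h1 : (finCongr hsum k) = Fin.castAdd (n - c) ⟨(k : ℕ), hk⟩ := by
        ext; simp
      have : E k = ((e1.symm ⟨(k : ℕ), hk⟩ : {i // p i}) : Fin n) := by
        simp only [E, Equiv.trans_apply, h1, finSumFinEquiv_symm_apply_castAdd,
          Equiv.sumCongr_apply, Sum.map_inl, Equiv.sumCompl_apply_inl]
      rw [this]
      simpa [hk] using (e1.symm ⟨(k : ℕ), hk⟩).2
    · have h1 : (finCongr hsum k) = Fin.natAdd c ⟨(k : ℕ) - c, by omega⟩ := by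
        ext; simp; omega
      have : E k = ((e2.symm ⟨(k : ℕ) - c, by omega⟩ : {i // ¬ p i}) : Fin n) := by
        simp only [E, Equiv.trans_apply, h1, finSumFinEquiv_symm_apply_natAdd,
          Equiv.sumCongr_apply, Sum.map_inr, Equiv.sumCompl_apply_inr]
      rw [this]
      simp only [hk, iff_false]
      exact (e2.symm ⟨(k : ℕ) - c, by omega⟩).2
  refine ⟨E, fun i => ?_⟩
  have := key (E.symm i)
  rwa [Equiv.apply_symm_apply] at this

lemma exists_sort_perm_with (p : Fin n → Prop) [DecidablePred p] (t : Fin n) (hpt : ¬ p t) :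
    ∃ (σ : Equiv.Perm (Fin n)) (c : ℕ), c < n ∧ ((σ.symm t : Fin n) : ℕ) = c ∧
      (∀ i, i ≠ t → (p i ↔ ((σ.symm i : Fin n) : ℕ) < c)) := by
  classical
  obtain ⟨σ₁, hσ₁⟩ := exists_sort_perm p
  set c := Fintype.card {i // p i} with hc
  have hct : ¬ ((σ₁.symm t : Fin n) : ℕ) < c := fun h => hpt ((hσ₁ t).2 h)
  have hcn : c < n := lt_of_le_of_lt (not_lt.1 hct) (σ₁.symm t).isLt
  set jc : Fin n := ⟨c, hcn⟩ with hjc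
  set j1 : Fin n := σ₁.symm t with hj1
  refine ⟨σ₁ * Equiv.swap jc j1, c, hcn, ?_, ?_⟩
  · have : (σ₁ * Equiv.swap jc j1).symm t = Equiv.swap jc j1 (σ₁.symm t) := by
      simp [Equiv.Perm.mul_def, Equiv.symm_trans_apply, Equiv.symm_swap]
    rw [this, ← hj1, Equiv.swap_apply_right]
  · intro i hit
    have hsymm : (σ₁ * Equiv.swap jc j1).symm i = Equiv.swap jc j1 (σ₁.symm i) := by
      simp [Equiv.Perm.mul_def, Equiv.symm_trans_apply, Equiv.symm_swap]
    rw [hsymm]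
    have hne1 : σ₁.symm i ≠ j1 := by
      intro h
      apply hit
      have := congrArg σ₁ h
      simpa [hj1] using this
    by_cases hp : p i
    · have hlt : ((σ₁.symm i : Fin n) : ℕ) < c := (hσ₁ i).1 hp
      have hnec : σ₁.symm i ≠ jc := by
        intro h
        rw [h] at hlt
        simp [hjc] at hlt
      rw [Equiv.swap_apply_of_ne_of_ne hnec hne1]
      simp [hp, hlt]
    · have hge : ¬ ((σ₁.symm i : Fin n) : ℕ) < c := fun h => hp ((hσ₁ i).2 h)
      simp only [hp, false_iff]
      by_cases hnec : σ₁.symm i = jc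
      · rw [hnec, Equiv.swap_apply_left]
        exact hct
      · rw [Equiv.swap_apply_of_ne_of_ne hnec hne1]
        exact hge

end SortPerm


section Points

variable {F : Type*} [Field F] {n : ℕ}

def pt (γ ε' : Fin n → Bool) : ∀ i, ↥(utComp F (γ i)) := fun i =>
  if h : γ i = true then
    ⟨e12 F, by rw [h, utComp, if_pos rfl]; exact Submodule.subset_span rfl⟩
  else if hε : ε' i = true then
    ⟨e11 F, by
      rw [show γ i = false by simpa using h, utComp, if_neg (by simp)]
      exact Submodule.subset_span (Set.mem_insert _ _)⟩
  else
    ⟨e22 F, by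
      rw [show γ i = false by simpa using h, utComp, if_neg (by simp)]
      exact Submodule.subset_span (Set.mem_insert_iff.2 (Or.inr rfl))⟩

lemma pt01 (γ ε' : Fin n → Bool) (i : Fin n) :
    ((pt (F := F) γ ε' i : M2 F)) 0 1 = if γ i then 1 else 0 := by
  unfold pt
  by_cases h : γ i = true
  · simp [h, e12, Matrix.single]
  · by_cases hε : ε' i = true <;>
      simp [h, hε, e11, e22, Matrix.single]

lemma pt00 (γ ε' : Fin n → Bool) (i : Fin n) :
    ((pt (F := F) γ ε' i : M2 F)) 0 0 = if γ i then 0 else if ε' i then 1 else 0 := by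
  unfold pt
  by_cases h : γ i = true
  · simp [h, e12, Matrix.single]
  · by_cases hε : ε' i = true <;>
      simp [h, hε, e11, e22, Matrix.single]

lemma pt11 (γ ε' : Fin n → Bool) (i : Fin n) :
    ((pt (F := F) γ ε' i : M2 F)) 1 1 = if γ i then 0 else if ε' i then 0 else 1 := by
  unfold pt
  by_cases h : γ i = true
  · simp [h, e12, Matrix.single]
  · by_cases hε : ε' i = true <;>
      simp [h, hε, e11, e22, Matrix.single]

lemma mon_pt (γ ε ε' : Fin n → Bool) :
    mon γ ε (pt (F := F) γ ε') = if (∀ i, γ i = false → ε i = ε' i) then 1 else 0 := by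
  unfold mon
  by_cases h : ∀ i, γ i = false → ε i = ε' i
  · rw [if_pos h]
    apply Finset.prod_eq_one
    intro i _
    by_cases hγ : γ i = true
    · rw [if_pos hγ, pt01, if_pos hγ]
    · have hγf : γ i = false := by simpa using hγ
      have hee : ε i = ε' i := h i hγf
      rw [if_neg hγ]
      by_cases hε : ε i = true
      · rw [if_pos hε, pt00, if_neg hγ, if_pos (by rw [← hee]; exact hε)]
      · rw [if_neg hε, pt11, if_neg hγ, if_neg (by rw [← hee]; exact hε)]
  · rw [if_neg h]
    push_neg at h
    obtain ⟨i, hγf, hne⟩ := h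
    apply Finset.prod_eq_zero (Finset.mem_univ i)
    rw [if_neg (by simp [hγf])]
    by_cases hε : ε i = true
    · rw [if_pos hε, pt00, if_neg (by simp [hγf]), if_neg (by
        intro hc; exact hne (by rw [hε, hc]))]
    · rw [if_neg hε, pt11, if_neg (by simp [hγf]), if_pos (by
        rcases Bool.eq_false_or_eq_true (ε' i) with h1 | h1
        · exact h1
        · exact absurd ((show ε i = false by simpa using hε).trans h1.symm) hne)]

end Points

section CaseTwo

variable {F : Type*} [Field F] {n : ℕ}

lemma comp_cast_true {γ : Fin n → Bool} (x : ∀ i, ↥(utComp F (γ i))) {t : Fin n}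
    (h : γ t = true) : (x t : M2 F) ∈ utComp F true := by
  rw [← h]; exact (x t).2

lemma comp_cast_false {γ : Fin n → Bool} (x : ∀ i, ↥(utComp F (γ i))) {t : Fin n}
    (h : γ t = false) : (x t : M2 F) ∈ utComp F false := by
  rw [← h]; exact (x t).2

lemma vspan_two (γ : Fin n → Bool) (t₁ t₂ : Fin n) (h12 : t₁ ≠ t₂)
    (h1 : γ t₁ = true) (h2 : γ t₂ = true) :
    Vspan F (UTset F) γ = ⊥ := by
  rw [Vspan, Submodule.span_eq_bot]
  rintro f ⟨σ, b, hbB, rfl⟩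
  have hb : ∀ j, b j 1 0 = 0 := fun j => hbB j
  funext x
  rw [gen_eq σ b x hb]
  have hx1 : (x t₁ : M2 F) 0 0 = 0 ∧ (x t₁ : M2 F) 1 1 = 0 := by
    have hm := comp_true (comp_cast_true x h1)
    exact ⟨hm.1, hm.2.1⟩
  have hx2 : (x t₂ : M2 F) 0 0 = 0 ∧ (x t₂ : M2 F) 1 1 = 0 := by
    have hm := comp_true (comp_cast_true x h2)
    exact ⟨hm.1, hm.2.1⟩
  have e00 : (∏ i, (x i : M2 F) 0 0) = 0 :=
    Finset.prod_eq_zero (Finset.mem_univ t₁) hx1.1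
  have e11' : (∏ i, (x i : M2 F) 1 1) = 0 :=
    Finset.prod_eq_zero (Finset.mem_univ t₁) hx1.2
  have eA : ∀ j : Fin (n+1), monT (fun i => (x (σ i) : M2 F)) j = 0 := by
    intro j
    rw [monT_reindex]
    apply Finset.prod_eq_zero (Finset.mem_univ t₁)
    by_cases hc : ((σ.symm t₁ : Fin n) : ℕ) < (j : ℕ)
    · rw [if_pos hc]; exact hx1.1
    · rw [if_neg hc]; exact hx1.2
  have eB : ∀ j : Fin n, monU (fun i => (x (σ i) : M2 F)) j = 0 := by
    intro j
    rw [monU_reindex]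
    by_cases hc : σ j = t₁
    · apply Finset.prod_eq_zero (Finset.mem_univ t₂)
      have hne : t₂ ≠ σ j := by rw [hc]; exact (Ne.symm h12)
      by_cases hlt : ((σ.symm t₂ : Fin n) : ℕ) < (j : ℕ)
      · rw [if_pos hlt]; exact hx2.1
      · rw [if_neg hlt, if_neg hne]; exact hx2.2
    · apply Finset.prod_eq_zero (Finset.mem_univ t₁)
      have hne : t₁ ≠ σ j := fun h => hc h.symm
      by_cases hlt : ((σ.symm t₁ : Fin n) : ℕ) < (j : ℕ)
      · rw [if_pos hlt]; exact hx1.1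
      · rw [if_neg hlt, if_neg hne]; exact hx1.2
  have sA : (∑ j : Fin (n+1), Acoef b j * monT (fun i => (x (σ i) : M2 F)) j) = 0 :=
    Finset.sum_eq_zero (fun j _ => by rw [eA j, mul_zero])
  have sB : (∑ j : Fin n, Bcoef b j * monU (fun i => (x (σ i) : M2 F)) j) = 0 :=
    Finset.sum_eq_zero (fun j _ => by rw [eB j, mul_zero])
  rw [e00, e11', sA, sB]
  simp

end CaseTwo


section CaseOne

variable {F : Type*} [Field F] {n : ℕ}

lemma monT_zero {γ : Fin n → Bool} (σ : Equiv.Perm (Fin n)) (x : ∀ i, ↥(utComp F (γ i)))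
    {t : Fin n} (h00 : (x t : M2 F) 0 0 = 0) (h11 : (x t : M2 F) 1 1 = 0) (j : Fin (n+1)) :
    monT (fun i => (x (σ i) : M2 F)) j = 0 := by
  rw [monT_reindex]
  apply Finset.prod_eq_zero (Finset.mem_univ t)
  by_cases hc : ((σ.symm t : Fin n) : ℕ) < (j : ℕ)
  · rw [if_pos hc]; exact h00
  · rw [if_neg hc]; exact h11

lemma monU_zero {γ : Fin n → Bool} (σ : Equiv.Perm (Fin n)) (x : ∀ i, ↥(utComp F (γ i)))
    {t : Fin n} (h00 : (x t : M2 F) 0 0 = 0) (h11 : (x t : M2 F) 1 1 = 0) (j : Fin n)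
    (hne : σ j ≠ t) : monU (fun i => (x (σ i) : M2 F)) j = 0 := by
  rw [monU_reindex]
  apply Finset.prod_eq_zero (Finset.mem_univ t)
  by_cases hc : ((σ.symm t : Fin n) : ℕ) < (j : ℕ)
  · rw [if_pos hc]; exact h00
  · rw [if_neg hc, if_neg (fun h => hne h.symm)]; exact h11

variable (γ : Fin n → Bool) (t : Fin n) (hγ : ∀ i, γ i = true ↔ i = t)
include hγ

lemma xt_zero (x : ∀ i, ↥(utComp F (γ i))) :
    (x t : M2 F) 0 0 = 0 ∧ (x t : M2 F) 1 1 = 0 := by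
  have hm := comp_true (comp_cast_true x ((hγ t).2 rfl))
  exact ⟨hm.1, hm.2.1⟩

lemma vspan_one_le :
    Vspan F (UTset F) γ ≤ Submodule.span F
      (Set.range (fun ε : {ε : Fin n → Bool // ε t = false} =>
        hfun γ (ε : Fin n → Bool))) := by
  classical
  rw [Vspan]
  apply Submodule.span_le.2
  rintro f ⟨σ, b, hbB, rfl⟩
  have hb : ∀ j, b j 1 0 = 0 := fun j => hbB j
  set j0 : Fin n := σ.symm t with hj0
  set ε₀ : Fin n → Bool := fun i => decide (((σ.symm i : Fin n) : ℕ) < ((j0 : Fin n) : ℕ))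
    with hε₀
  have hε₀t : ε₀ t = false := by simp [hε₀, hj0]
  have key : (fun x : ∀ i, ↥(utComp F (γ i)) =>
      b 0 * (List.ofFn fun i : Fin n => ((x (σ i) : M2 F) * b i.succ)).prod)
      = Bcoef b j0 • hfun γ ε₀ := by
    funext x
    show b 0 * (List.ofFn fun i : Fin n => ((x (σ i) : M2 F) * b i.succ)).prod = _
    rw [gen_eq σ b x hb]
    obtain ⟨h00, h11⟩ := xt_zero γ t hγ x
    have e00 : (∏ i, (x i : M2 F) 0 0) = 0 :=
      Finset.prod_eq_zero (Finset.mem_univ t) h00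
    have e11' : (∏ i, (x i : M2 F) 1 1) = 0 :=
      Finset.prod_eq_zero (Finset.mem_univ t) h11
    have sA : (∑ j : Fin (n+1), Acoef b j * monT (fun i => (x (σ i) : M2 F)) j) = 0 :=
      Finset.sum_eq_zero (fun j _ => by rw [monT_zero σ x h00 h11, mul_zero])
    have sB : (∑ j : Fin n, Bcoef b j * monU (fun i => (x (σ i) : M2 F)) j)
        = Bcoef b j0 * monU (fun i => (x (σ i) : M2 F)) j0 := by
      apply Finset.sum_eq_single
      · intro j _ hjne
        rw [monU_zero σ x h00 h11 j (fun h => hjne (by rw [hj0, ← h, Equiv.symm_apply_apply])),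
          mul_zero]
      · intro h
        exact absurd (Finset.mem_univ j0) h
    have hmon : monU (fun i => (x (σ i) : M2 F)) j0 = mon γ ε₀ x := by
      rw [monU_reindex]
      apply Finset.prod_congr rfl
      intro i _
      by_cases hi : i = t
      · subst hi
        rw [if_neg (by rw [← hj0]; omega), if_pos (by rw [hj0, Equiv.apply_symm_apply]),
          if_pos ((hγ i).2 rfl)]
      · have hγi : ¬ (γ i = true) := fun h => hi ((hγ i).1 h)
        rw [if_neg hγi]
        by_cases hc : ((σ.symm i : Fin n) : ℕ) < ((j0 : Fin n) : ℕ)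
        · rw [if_pos hc, if_pos (by simp only [hε₀, decide_eq_true_eq]; exact hc)]
        · rw [if_neg hc, if_neg (fun h => hi (by rw [h, hj0, Equiv.apply_symm_apply])),
            if_neg (by simp only [hε₀, decide_eq_true_eq]; exact hc)]
    rw [e00, e11', sA, sB, hmon]
    simp [hfun, smul_smul]
  rw [key]
  exact Submodule.smul_mem _ _ (Submodule.subset_span ⟨⟨ε₀, hε₀t⟩, rfl⟩)

lemma hfun_mem_one (ε : Fin n → Bool) :
    hfun γ ε ∈ Vspan F (UTset F) γ := by
  classical
  obtain ⟨σ, c, hcn, hct, hsort⟩ :=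
    exists_sort_perm_with (fun i => ε i = true ∧ i ≠ t) t (by simp)
  set b : Fin (n+1) → M2 F := fun m => if (m : ℕ) ≤ c then e11 F else e22 F with hbdef
  have hbB : ∀ j, b j ∈ UTset F := by
    intro j
    show b j 1 0 = 0
    simp only [hbdef]
    split <;> simp [e11, e22, Matrix.single]
  apply Submodule.subset_span
  refine ⟨σ, b, hbB, ?_⟩
  funext x
  show mon γ ε x • e12 F = _
  rw [gen_eq σ b x (fun j => hbB j)]
  obtain ⟨h00, h11⟩ := xt_zero γ t hγ x
  have e00 : (∏ i, (x i : M2 F) 0 0) = 0 :=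
    Finset.prod_eq_zero (Finset.mem_univ t) h00
  have e11' : (∏ i, (x i : M2 F) 1 1) = 0 :=
    Finset.prod_eq_zero (Finset.mem_univ t) h11
  have sA : (∑ j : Fin (n+1), Acoef b j * monT (fun i => (x (σ i) : M2 F)) j) = 0 :=
    Finset.sum_eq_zero (fun j _ => by rw [monT_zero σ x h00 h11, mul_zero])
  set j0 : Fin n := σ.symm t with hj0
  have hj0c : ((j0 : Fin n) : ℕ) = c := hct
  have sB : (∑ j : Fin n, Bcoef b j * monU (fun i => (x (σ i) : M2 F)) j)
      = Bcoef b j0 * monU (fun i => (x (σ i) : M2 F)) j0 := by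
    apply Finset.sum_eq_single
    · intro j _ hjne
      rw [monU_zero σ x h00 h11 j (fun h => hjne (by rw [hj0, ← h, Equiv.symm_apply_apply])),
        mul_zero]
    · intro h
      exact absurd (Finset.mem_univ j0) h
  have hBc : Bcoef b j0 = 1 := by
    unfold Bcoef
    have f1 : (∏ m : Fin (n+1), if (m : ℕ) ≤ ((j0 : Fin n) : ℕ) then b m 0 0 else 1) = 1 := by
      apply Finset.prod_eq_one
      intro m _
      by_cases hm : (m : ℕ) ≤ ((j0 : Fin n) : ℕ)
      · rw [if_pos hm, hbdef]
        simp only []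
        rw [if_pos (by omega)]
        simp [e11, Matrix.single]
      · rw [if_neg hm]
    have f2 : b j0.succ 1 1 = 1 := by
      rw [hbdef]
      simp only []
      rw [if_neg (by rw [Fin.val_succ]; omega)]
      simp [e22, Matrix.single]
    have f3 : (∏ m : Fin (n+1), if ((j0 : Fin n) : ℕ) + 1 < (m : ℕ) then b m 1 1 else 1) = 1 := by
      apply Finset.prod_eq_one
      intro m _
      by_cases hm : ((j0 : Fin n) : ℕ) + 1 < (m : ℕ)
      · rw [if_pos hm, hbdef]
        simp only []
        rw [if_neg (by omega)]
        simp [e22, Matrix.single]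
      · rw [if_neg hm]
    rw [f1, f2, f3]
    ring
  have hmon : monU (fun i => (x (σ i) : M2 F)) j0 = mon γ ε x := by
    rw [monU_reindex]
    apply Finset.prod_congr rfl
    intro i _
    by_cases hi : i = t
    · subst hi
      rw [if_neg (by rw [← hj0]; omega), if_pos (by rw [hj0, Equiv.apply_symm_apply]),
        if_pos ((hγ i).2 rfl)]
    · have hγi : ¬ (γ i = true) := fun h => hi ((hγ i).1 h)
      rw [if_neg hγi]
      by_cases hc : ε i = true
      · have hlt : ((σ.symm i : Fin n) : ℕ) < c := (hsort i hi).1 ⟨hc, hi⟩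
        rw [if_pos (by omega), if_pos hc]
      · have hge : ¬ (((σ.symm i : Fin n) : ℕ) < c) := fun h => hc ((hsort i hi).2 h).1
        rw [if_neg (by omega), if_neg (fun h => hi (by rw [h, hj0, Equiv.apply_symm_apply])),
          if_neg hc]
  rw [e00, e11', sA, sB, hBc, hmon]
  simp

lemma finrank_one : Module.finrank F ↥(Vspan F (UTset F) γ) = 2 ^ (n - 1) := by
  classical
  set G : {ε : Fin n → Bool // ε t = false} → ((∀ i, ↥(utComp F (γ i))) → M2 F) :=
    fun ε => hfun γ (ε : Fin n → Bool) with hG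
  have hspan : Vspan F (UTset F) γ = Submodule.span F (Set.range G) := by
    apply le_antisymm (vspan_one_le γ t hγ)
    apply Submodule.span_le.2
    rintro _ ⟨ε, rfl⟩
    exact hfun_mem_one γ t hγ ε
  have hcond : ∀ ε ε' : {ε : Fin n → Bool // ε t = false},
      ((∀ i, γ i = false → ε.1 i = ε'.1 i) ↔ ε = ε') := by
    intro ε ε'
    constructor
    · intro h
      apply Subtype.ext
      funext i
      by_cases hi : i = t
      · subst hi; rw [ε.2, ε'.2]
      · exact h i (by
          rcases Bool.eq_false_or_eq_true (γ i) with h1 | h1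
          · exact absurd ((hγ i).1 h1) hi
          · exact h1)
    · rintro rfl
      exact fun i _ => rfl
  have hind : LinearIndependent F G := by
    rw [Fintype.linearIndependent_iff]
    intro g hg ε'
    have h01 : (∑ ε : {ε : Fin n → Bool // ε t = false}, g ε • G ε) (pt γ ε'.1) 0 1 = 0 := by
      rw [hg]; simp
    rw [Finset.sum_apply] at h01
    simp only [Pi.smul_apply, hG, hfun, Matrix.smul_apply, smul_eq_mul, Matrix.sum_apply,
      mon_pt] at h01
    have h2 : ∀ ε : {ε : Fin n → Bool // ε t = false},
        g ε * ((if (∀ i, γ i = false → ε.1 i = ε'.1 i) then (1:F) else 0) * e12 F 0 1)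
        = if ε = ε' then g ε else 0 := by
      intro ε
      rw [if_congr (hcond ε ε') rfl rfl]
      by_cases h : ε = ε'
      · rw [if_pos h, if_pos h]
        simp [e12, Matrix.single]
      · rw [if_neg h, if_neg h]
        ring
    rw [Finset.sum_congr rfl (fun ε _ => h2 ε)] at h01
    rwa [Finset.sum_ite_eq' Finset.univ ε' g, if_pos (Finset.mem_univ ε')] at h01
  rw [hspan, finrank_span_eq_card hind]
  have e : {ε : Fin n → Bool // ε t = false} ≃ ({i : Fin n // i ≠ t} → Bool) :=
    { toFun := fun ε i => ε.1 i.1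
      invFun := fun g => ⟨fun i => if h : i = t then false else g ⟨i, h⟩, by simp⟩
      left_inv := by
        intro ε
        apply Subtype.ext
        funext i
        by_cases h : i = t
        · subst h; simp [ε.2]
        · simp [h]
      right_inv := by
        intro g
        funext i
        simp [i.2] }
  rw [Fintype.card_congr e, Fintype.card_fun]
  have hcard : Fintype.card {i : Fin n // i ≠ t} = n - 1 := by
    have := Fintype.card_subtype_compl (fun i : Fin n => i = t)
    rw [Fintype.card_subtype_eq t] at this
    simpa using this
  rw [hcard, Fintype.card_bool]

end CaseOne


section CaseZero

variable {F : Type*} [Field F] {n : ℕ} (γ : Fin n → Bool) (hγ : ∀ i, γ i = false)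

/-- the spanning family for the case of no odd variables -/
def Gfam (γ : Fin n → Bool) : ((Fin n → Bool) ⊕ Bool) → ((∀ i, ↥(utComp F (γ i))) → M2 F) :=
  Sum.elim (fun ε => hfun γ ε) (fun s => if s then dfun1 γ else dfun2 γ)

include hγ

lemma monU_zero' (σ : Equiv.Perm (Fin n)) (x : ∀ i, ↥(utComp F (γ i))) (j : Fin n) :
    monU (fun i => (x (σ i) : M2 F)) j = 0 := by
  rw [monU_reindex]
  apply Finset.prod_eq_zero (Finset.mem_univ (σ j))
  rw [if_neg (by rw [Equiv.symm_apply_apply]; omega), if_pos rfl]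
  exact (comp_false (comp_cast_false x (hγ (σ j)))).1

lemma monT_mon (σ : Equiv.Perm (Fin n)) (x : ∀ i, ↥(utComp F (γ i))) (j : Fin (n+1)) :
    monT (fun i => (x (σ i) : M2 F)) j
      = mon γ (fun i => decide (((σ.symm i : Fin n) : ℕ) < (j : ℕ))) x := by
  rw [monT_reindex]
  apply Finset.prod_congr rfl
  intro i _
  simp [hγ i]

lemma vspan_zero_le :
    Vspan F (UTset F) γ ≤ Submodule.span F (Set.range (Gfam (F := F) γ)) := by
  classical
  rw [Vspan]
  apply Submodule.span_le.2
  rintro f ⟨σ, b, hbB, rfl⟩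
  have hb : ∀ j, b j 1 0 = 0 := fun j => hbB j
  have key : (fun x : ∀ i, ↥(utComp F (γ i)) =>
      b 0 * (List.ofFn fun i : Fin n => ((x (σ i) : M2 F) * b i.succ)).prod)
      = (∏ j, b j 0 0) • dfun1 γ + (∏ j, b j 1 1) • dfun2 γ
        + ∑ j : Fin (n+1), Acoef b j •
            hfun γ (fun i => decide (((σ.symm i : Fin n) : ℕ) < (j : ℕ))) := by
    funext x
    show b 0 * (List.ofFn fun i : Fin n => ((x (σ i) : M2 F) * b i.succ)).prod = _
    rw [gen_eq σ b x hb]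
    have sB : (∑ j : Fin n, Bcoef b j * monU (fun i => (x (σ i) : M2 F)) j) = 0 :=
      Finset.sum_eq_zero (fun j _ => by rw [monU_zero' γ hγ σ x j, mul_zero])
    rw [sB, add_zero,
      Finset.sum_congr rfl (fun j (_ : j ∈ Finset.univ) => by rw [monT_mon γ hγ σ x j])]
    simp only [Pi.add_apply, Pi.smul_apply, Finset.sum_apply, dfun1, dfun2, hfun,
      smul_smul, Finset.sum_smul]
    abel
  rw [key]
  refine Submodule.add_mem _ (Submodule.add_mem _ ?_ ?_) ?_
  · exact Submodule.smul_mem _ _ (Submodule.subset_span ⟨Sum.inr true, rfl⟩)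
  · exact Submodule.smul_mem _ _ (Submodule.subset_span ⟨Sum.inr false, rfl⟩)
  · exact Submodule.sum_mem _ (fun j _ =>
      Submodule.smul_mem _ _ (Submodule.subset_span ⟨Sum.inl _, rfl⟩))

lemma dfun1_mem : dfun1 γ ∈ Vspan F (UTset F) γ := by
  apply Submodule.subset_span
  refine ⟨1, fun _ => e11 F, fun j => by show e11 F 1 0 = 0; simp [e11, Matrix.single], ?_⟩
  funext x
  show dfun1 γ x = _
  rw [gen_eq 1 (fun _ => e11 F) x (fun j => by simp [e11, Matrix.single])]
  have sB : (∑ j : Fin n, Bcoef (fun _ => e11 F) j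
      * monU (fun i => (x ((1 : Equiv.Perm (Fin n)) i) : M2 F)) j) = 0 :=
    Finset.sum_eq_zero (fun j _ => by rw [monU_zero' γ hγ 1 x j, mul_zero])
  rw [sB]
  simp [Acoef, dfun1, e11, Matrix.single, Finset.prod_const]

lemma dfun2_mem : dfun2 γ ∈ Vspan F (UTset F) γ := by
  apply Submodule.subset_span
  refine ⟨1, fun _ => e22 F, fun j => by show e22 F 1 0 = 0; simp [e22, Matrix.single], ?_⟩
  funext x
  show dfun2 γ x = _
  rw [gen_eq 1 (fun _ => e22 F) x (fun j => by simp [e22, Matrix.single])]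
  have sB : (∑ j : Fin n, Bcoef (fun _ => e22 F) j
      * monU (fun i => (x ((1 : Equiv.Perm (Fin n)) i) : M2 F)) j) = 0 :=
    Finset.sum_eq_zero (fun j _ => by rw [monU_zero' γ hγ 1 x j, mul_zero])
  rw [sB]
  simp [Acoef, dfun2, e22, Matrix.single, Finset.prod_const]

lemma hfun_mem_zero (ε : Fin n → Bool) : hfun γ ε ∈ Vspan F (UTset F) γ := by
  classical
  obtain ⟨σ, hsort⟩ := exists_sort_perm (fun i => ε i = true)
  set c : ℕ := Fintype.card {i // ε i = true} with hc
  have hle : c ≤ n := by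
    have := Fintype.card_subtype_le (fun i : Fin n => ε i = true)
    simpa [hc] using this
  set b : Fin (n+1) → M2 F := fun m =>
    if (m : ℕ) < c then e11 F else if (m : ℕ) = c then e12 F else e22 F with hbdef
  have hbB : ∀ j, b j ∈ UTset F := by
    intro j
    show b j 1 0 = 0
    simp only [hbdef]
    split
    · simp [e11, Matrix.single]
    · split <;> simp [e12, e22, Matrix.single]
  apply Submodule.subset_span
  refine ⟨σ, b, hbB, ?_⟩
  funext x
  show mon γ ε x • e12 F = _
  rw [gen_eq σ b x (fun j => hbB j)]
  set jc : Fin (n+1) := ⟨c, by omega⟩ with hjc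
  have hjcv : ((jc : Fin (n+1)) : ℕ) = c := rfl
  have hbjc : b jc = e12 F := by
    simp only [hbdef, hjc]
    rw [if_neg (by simp), if_pos (by simp)]
  have h1 : (∏ j, b j 0 0) = 0 := by
    apply Finset.prod_eq_zero (Finset.mem_univ jc)
    rw [hbjc]; simp [e12, Matrix.single]
  have h2 : (∏ j, b j 1 1) = 0 := by
    apply Finset.prod_eq_zero (Finset.mem_univ jc)
    rw [hbjc]; simp [e12, Matrix.single]
  have sB : (∑ j : Fin n, Bcoef b j * monU (fun i => (x (σ i) : M2 F)) j) = 0 :=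
    Finset.sum_eq_zero (fun j _ => by rw [monU_zero' γ hγ σ x j, mul_zero])
  have sA : (∑ j : Fin (n+1), Acoef b j * monT (fun i => (x (σ i) : M2 F)) j)
      = Acoef b jc * monT (fun i => (x (σ i) : M2 F)) jc := by
    apply Finset.sum_eq_single
    · intro j _ hjne
      have hb01 : b j 0 1 = 0 := by
        simp only [hbdef]
        split
        · simp [e11, Matrix.single]
        · split
          · refine absurd (Fin.ext ?_) hjne
            rw [hjcv]
            omega
          · simp [e22, Matrix.single]
      unfold Acoef
      rw [hb01, mul_zero, zero_mul, zero_mul]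
    · intro h
      exact absurd (Finset.mem_univ jc) h
  have hAc : Acoef b jc = 1 := by
    unfold Acoef
    have f1 : (∏ m : Fin (n+1), if (m : ℕ) < ((jc : Fin (n+1)) : ℕ) then b m 0 0 else 1) = 1 := by
      apply Finset.prod_eq_one
      intro m _
      by_cases hm : (m : ℕ) < ((jc : Fin (n+1)) : ℕ)
      · rw [if_pos hm, hbdef]
        simp only []
        rw [if_pos (by rw [hjcv] at hm; omega)]
        simp [e11, Matrix.single]
      · rw [if_neg hm]
    have f2 : b jc 0 1 = 1 := by rw [hbjc]; simp [e12, Matrix.single]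
    have f3 : (∏ m : Fin (n+1), if ((jc : Fin (n+1)) : ℕ) < (m : ℕ) then b m 1 1 else 1) = 1 := by
      apply Finset.prod_eq_one
      intro m _
      by_cases hm : ((jc : Fin (n+1)) : ℕ) < (m : ℕ)
      · rw [if_pos hm, hbdef]
        simp only []
        rw [if_neg (by rw [hjcv] at hm; omega), if_neg (by rw [hjcv] at hm; omega)]
        simp [e22, Matrix.single]
      · rw [if_neg hm]
    rw [f1, f2, f3]
    ring
  have hmon : monT (fun i => (x (σ i) : M2 F)) jc = mon γ ε x := by
    rw [monT_reindex]
    apply Finset.prod_congr rfl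
    intro i _
    have hγi : ¬ (γ i = true) := by simp [hγ i]
    by_cases hε : ε i = true
    · rw [if_pos (by have := (hsort i).1 hε; rw [hjcv]; omega), if_neg hγi, if_pos hε]
    · rw [if_neg (by
        intro hcon
        exact hε ((hsort i).2 (by rw [hjcv] at hcon; omega))), if_neg hγi, if_neg hε]
  rw [h1, h2, sB, sA, hAc, hmon]
  simp

lemma finrank_zero : Module.finrank F ↥(Vspan F (UTset F) γ) = 2 ^ n + 2 := by
  classical
  have hspan : Vspan F (UTset F) γ = Submodule.span F (Set.range (Gfam (F := F) γ)) := by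
    apply le_antisymm (vspan_zero_le γ hγ)
    apply Submodule.span_le.2
    rintro _ ⟨i, rfl⟩
    rcases i with ε | s
    · exact hfun_mem_zero γ hγ ε
    · rcases s with _ | _
      · show (if false then dfun1 γ else dfun2 γ) ∈ _
        simpa using dfun2_mem γ hγ
      · show (if true then dfun1 γ else dfun2 γ) ∈ _
        simpa using dfun1_mem γ hγ
  have hcond : ∀ ε ε' : Fin n → Bool, ((∀ i, γ i = false → ε i = ε' i) ↔ ε = ε') := by
    intro ε ε'
    constructor
    · intro h
      funext i
      exact h i (hγ i)
    · rintro rfl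
      exact fun i _ => rfl
  have hind : LinearIndependent F (Gfam (F := F) γ) := by
    rw [Fintype.linearIndependent_iff]
    intro g hg
    have hEval : ∀ (x : ∀ i, ↥(utComp F (γ i))) (a d : Fin 2),
        ∑ i, g i * ((Gfam (F := F) γ) i x a d) = 0 := by
      intro x a d
      have h := congrFun hg x
      rw [Finset.sum_apply, Pi.zero_apply] at h
      have h2 := congrArg (fun M : M2 F => M a d) h
      simpa [Matrix.sum_apply, Pi.smul_apply, Matrix.smul_apply] using h2
    have hinl : ∀ ε', g (Sum.inl ε') = 0 := by
      intro ε'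
      have h := hEval (pt γ ε') 0 1
      rw [Fintype.sum_sum_type] at h
      have hr : (∑ s : Bool, g (Sum.inr s) * ((Gfam (F := F) γ) (Sum.inr s) (pt γ ε') 0 1)) = 0 := by
        rw [Fintype.sum_bool]
        have hd1 : (Gfam (F := F) γ) (Sum.inr true) (pt γ ε') 0 1 = 0 := by
          show (if true then dfun1 γ else dfun2 γ) (pt γ ε') 0 1 = 0
          simp [dfun1, e11, Matrix.single]
        have hd2 : (Gfam (F := F) γ) (Sum.inr false) (pt γ ε') 0 1 = 0 := by
          show (if false then dfun1 γ else dfun2 γ) (pt γ ε') 0 1 = 0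
          simp [dfun2, e22, Matrix.single]
        rw [hd1, hd2, mul_zero, mul_zero, add_zero]
      rw [hr, add_zero] at h
      have h2 : ∀ ε : Fin n → Bool,
          g (Sum.inl ε) * ((Gfam (F := F) γ) (Sum.inl ε) (pt γ ε') 0 1)
          = if ε = ε' then g (Sum.inl ε) else 0 := by
        intro ε
        show g (Sum.inl ε) * (hfun γ ε (pt γ ε') 0 1) = _
        rw [hfun, mon_pt, Matrix.smul_apply, smul_eq_mul, if_congr (hcond ε ε') rfl rfl]
        by_cases hh : ε = ε'
        · rw [if_pos hh, if_pos hh]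
          simp [e12, Matrix.single]
        · rw [if_neg hh, if_neg hh]
          ring
      rw [Finset.sum_congr rfl (fun ε _ => h2 ε)] at h
      rwa [Finset.sum_ite_eq' Finset.univ ε' (fun ε => g (Sum.inl ε)),
        if_pos (Finset.mem_univ ε')] at h
    have hinr : ∀ s, g (Sum.inr s) = 0 := by
      have hpt00 : ∀ i, ((pt (F := F) γ (fun _ => true) i : M2 F)) 0 0 = 1 := by
        intro i
        rw [pt00, if_neg (by rw [hγ i]; simp)]
        simp
      have hpt11 : ∀ i, ((pt (F := F) γ (fun _ => false) i : M2 F)) 1 1 = 1 := by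
        intro i
        rw [pt11, if_neg (by rw [hγ i]; simp)]
        simp
      intro s
      rcases s with _ | _
      · have h := hEval (pt γ (fun _ => false)) 1 1
        rw [Fintype.sum_sum_type] at h
        have hl : (∑ ε : Fin n → Bool, g (Sum.inl ε) *
            ((Gfam (F := F) γ) (Sum.inl ε) (pt γ (fun _ => false)) 1 1)) = 0 :=
          Finset.sum_eq_zero (fun ε _ => by rw [hinl ε, zero_mul])
        rw [hl, zero_add, Fintype.sum_bool] at h
        have hd1 : (Gfam (F := F) γ) (Sum.inr true) (pt γ (fun _ => false)) 1 1 = 0 := by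
          show dfun1 γ (pt γ (fun _ => false)) 1 1 = 0
          simp [dfun1, e11, Matrix.single]
        have hd2 : (Gfam (F := F) γ) (Sum.inr false) (pt γ (fun _ => false)) 1 1 = 1 := by
          show dfun2 γ (pt γ (fun _ => false)) 1 1 = 1
          unfold dfun2
          rw [Matrix.smul_apply, Finset.prod_congr rfl (fun i _ => hpt11 i)]
          simp [e22, Matrix.single]
        rw [hd1, hd2, mul_zero, mul_one, zero_add] at h
        exact h
      · have h := hEval (pt γ (fun _ => true)) 0 0
        rw [Fintype.sum_sum_type] at h
        have hl : (∑ ε : Fin n → Bool, g (Sum.inl ε) *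
            ((Gfam (F := F) γ) (Sum.inl ε) (pt γ (fun _ => true)) 0 0)) = 0 :=
          Finset.sum_eq_zero (fun ε _ => by rw [hinl ε, zero_mul])
        rw [hl, zero_add, Fintype.sum_bool] at h
        have hd1 : (Gfam (F := F) γ) (Sum.inr true) (pt γ (fun _ => true)) 0 0 = 1 := by
          show dfun1 γ (pt γ (fun _ => true)) 0 0 = 1
          unfold dfun1
          rw [Matrix.smul_apply, Finset.prod_congr rfl (fun i _ => hpt00 i)]
          simp [e11, Matrix.single]
        have hd2 : (Gfam (F := F) γ) (Sum.inr false) (pt γ (fun _ => true)) 0 0 = 0 := by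
          show dfun2 γ (pt γ (fun _ => true)) 0 0 = 0
          simp [dfun2, e22, Matrix.single]
        rw [hd1, hd2, mul_zero, mul_one, add_zero] at h
        exact h
    intro i
    rcases i with ε | s
    · exact hinl ε
    · exact hinr s
  rw [hspan, finrank_span_eq_card hind]
  simp [Fintype.card_sum, Fintype.card_fun]

end CaseZero


section Final

variable {F : Type*} [Field F] {n : ℕ}

lemma finrank_cases (γ : Fin n → Bool) :
    Module.finrank F ↥(Vspan F (UTset F) γ)
      = if (Finset.univ.filter (fun i => γ i = true)).card = 0 then 2 ^ n + 2
        else if (Finset.univ.filter (fun i => γ i = true)).card = 1 then 2 ^ (n - 1)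
        else 0 := by
  classical
  by_cases h0 : (Finset.univ.filter (fun i => γ i = true)).card = 0
  · rw [if_pos h0]
    apply finrank_zero γ
    intro i
    have hemp := Finset.card_eq_zero.1 h0
    have : i ∉ Finset.univ.filter (fun i => γ i = true) := by rw [hemp]; simp
    simp only [Finset.mem_filter, Finset.mem_univ, true_and] at this
    simpa using this
  · rw [if_neg h0]
    by_cases h1 : (Finset.univ.filter (fun i => γ i = true)).card = 1
    · rw [if_pos h1]
      obtain ⟨t, ht⟩ := Finset.card_eq_one.1 h1
      apply finrank_one γ t
      intro i
      constructor
      · intro h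
        have : i ∈ Finset.univ.filter (fun i => γ i = true) := by
          simp [h]
        rw [ht] at this
        simpa using this
      · intro h
        subst h
        have : i ∈ Finset.univ.filter (fun i => γ i = true) := by
          rw [ht]; simp
        simpa using (Finset.mem_filter.1 this).2
    · rw [if_neg h1]
      have h2 : 1 < (Finset.univ.filter (fun i => γ i = true)).card := by omega
      obtain ⟨t₁, ht₁, t₂, ht₂, hne⟩ := Finset.one_lt_card.1 h2
      rw [vspan_two γ t₁ t₂ hne (Finset.mem_filter.1 ht₁).2 (Finset.mem_filter.1 ht₂).2]
      exact finrank_bot F _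

lemma card_zero_filter :
    (Finset.univ.filter (fun γ : Fin n → Bool =>
      (Finset.univ.filter (fun i => γ i = true)).card = 0)).card = 1 := by
  classical
  rw [show (Finset.univ.filter (fun γ : Fin n → Bool =>
      (Finset.univ.filter (fun i => γ i = true)).card = 0)) = {fun _ => false} from ?_]
  · exact Finset.card_singleton _
  · apply Finset.eq_singleton_iff_unique_mem.2
    constructor
    · simp
    · intro γ hγ
      simp only [Finset.mem_filter, Finset.mem_univ, true_and, Finset.card_eq_zero] at hγ
      funext i
      have : i ∉ Finset.univ.filter (fun i => γ i = true) := by rw [hγ]; simp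
      simp only [Finset.mem_filter, Finset.mem_univ, true_and] at this
      simpa using this

lemma card_one_filter :
    (Finset.univ.filter (fun γ : Fin n → Bool =>
      (Finset.univ.filter (fun i => γ i = true)).card = 1)).card = n := by
  classical
  have himg : (Finset.univ.filter (fun γ : Fin n → Bool =>
      (Finset.univ.filter (fun i => γ i = true)).card = 1))
      = Finset.image (fun t : Fin n => fun i => decide (i = t)) Finset.univ := by
    apply Finset.ext
    intro γ
    simp only [Finset.mem_filter, Finset.mem_univ, true_and, Finset.mem_image]
    constructor
    · intro h1
      obtain ⟨t, ht⟩ := Finset.card_eq_one.1 h1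
      refine ⟨t, ?_⟩
      funext i
      by_cases hi : i = t
      · subst hi
        have : i ∈ Finset.univ.filter (fun i => γ i = true) := by rw [ht]; simp
        have := (Finset.mem_filter.1 this).2
        simp [this]
      · have : i ∉ Finset.univ.filter (fun i => γ i = true) := by
          rw [ht]; simpa using hi
        simp only [Finset.mem_filter, Finset.mem_univ, true_and] at this
        simp [hi]
        simpa using this
    · rintro ⟨t, rfl⟩
      rw [show (Finset.univ.filter (fun i : Fin n => decide (i = t) = true)) = {t} from ?_]
      · exact Finset.card_singleton _
      · apply Finset.ext
        intro i
        simp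
  rw [himg, Finset.card_image_of_injective _ ?_, Finset.card_univ, Fintype.card_fin]
  intro t t' h
  have h2 := congrFun h t
  simp at h2
  exact h2

end Final

end Aux


/-- For every `n ≥ 1`, the `n`-th generalized graded codimension of `UT₂`
with its canonical `ℤ₂`-grading, under the action of `B = UT₂` itself by left and right
multiplication, is `c_n^{UT₂} = 2^{n-1}(n+2) + 2`. -/
theorem stmt11 (F : Type*) [Field F] [CharZero F] (n : ℕ) (hn : 1 ≤ n) :
    (∑ γ : Fin n → Bool, Module.finrank F ↥(Vspan F (UTset F) γ))
      = 2 ^ (n - 1) * (n + 2) + 2 := by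
  classical
  rw [Finset.sum_congr rfl (fun γ _ => Aux.finrank_cases (F := F) γ)]
  rw [Finset.sum_ite, Finset.sum_ite, Finset.sum_const, Finset.sum_const, Finset.sum_const]
  rw [Aux.card_zero_filter]
  have hcard1 : ((Finset.univ.filter (fun γ : Fin n → Bool =>
      ¬ (Finset.univ.filter (fun i => γ i = true)).card = 0)).filter
      (fun γ => (Finset.univ.filter (fun i => γ i = true)).card = 1)).card = n := by
    rw [Finset.filter_filter]
    have heq : Finset.filter (fun γ : Fin n → Bool =>
        ¬ (Finset.univ.filter (fun i => γ i = true)).card = 0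
          ∧ (Finset.univ.filter (fun i => γ i = true)).card = 1) Finset.univ
        = Finset.filter (fun γ : Fin n → Bool =>
            (Finset.univ.filter (fun i => γ i = true)).card = 1) Finset.univ := by
      apply Finset.filter_congr
      intro γ _
      constructor
      · exact fun h => h.2
      · intro h
        exact ⟨by omega, h⟩
    rw [heq]
    exact Aux.card_one_filter
  rw [hcard1]
  have h2 : (2:ℕ) ^ n = 2 * 2 ^ (n - 1) := by
    rw [← pow_succ', Nat.sub_add_cancel hn]
  simp only [smul_eq_mul, smul_zero, add_zero, one_mul]
  rw [h2]
  ring
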